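/- Let x* be an optimal solution of the market clearing LP with virtual linking bids with all S_v > 0. If there is a time period τ with p^{C,a*}_τ > 0 and sum_v p^{D,e*}_{v,τ} > 0, then there must exist another time period κ ≠ τ with p^{C,a*}_κ < 0. -/
import Mathlib


open Finset

/-- Data of the market-clearing LP with virtual linking bids (VLB), with `nT` time
periods (Δt = 1), `nL` loads, `nG` generators and `nV` stored inter-storage values. -/
structure MarketData (nT nL nG nV : ℕ) where
  /-- load utilities -/
  U : Fin nL → Fin nT → ℝ
  /-- generation costs -/
  C : Fin nG → Fin nT → ℝ
  /-- inter-storage bid prices (saved charging prices) -/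
  S : Fin nV → ℝ
  /-- generation capacities -/
  Pbar : Fin nG → Fin nT → ℝ
  /-- maximum loads -/
  Dbar : Fin nL → Fin nT → ℝ
  /-- initial inter-storage energy for each value -/
  Einit : Fin nV → ℝ
  /-- storage capacity -/
  Ebar : ℝ
  /-- required final storage level -/
  Eend : ℝ

/-- A point (candidate solution) of the VLB market-clearing LP. -/
structure Sol (nT nL nG nV : ℕ) where
  /-- accepted load quantities -/
  d : Fin nL → Fin nT → ℝ
  /-- accepted generation quantities -/
  p : Fin nG → Fin nT → ℝ
  /-- intra-storage charge (can be negative) -/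
  pC : Fin nT → ℝ
  /-- inter-storage discharge for each value -/
  pD : Fin nV → Fin nT → ℝ

variable {nT nL nG nV : ℕ}

/-- Combined storage level at the end of period `t`:
`∑_{i≤t} p^{C,a}_i + ∑_v (E^init_v − ∑_{i≤t} p^{D,e}_{v,i})`. -/
def level (M : MarketData nT nL nG nV) (x : Sol nT nL nG nV) (t : Fin nT) : ℝ :=
  (∑ i ∈ Finset.univ.filter (fun i => i ≤ t), x.pC i)
    + ∑ v, (M.Einit v - ∑ i ∈ Finset.univ.filter (fun i => i ≤ t), x.pD v i)

/-- Feasibility for the VLB market-clearing LP. -/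
def Feasible (M : MarketData nT nL nG nV) (x : Sol nT nL nG nV) : Prop :=
  (∀ t, (∑ l, x.d l t) + x.pC t - (∑ g, x.p g t) - (∑ v, x.pD v t) = 0) ∧
  (∀ g t, 0 ≤ x.p g t ∧ x.p g t ≤ M.Pbar g t) ∧
  (∀ l t, 0 ≤ x.d l t ∧ x.d l t ≤ M.Dbar l t) ∧
  (0 ≤ ∑ i, x.pC i) ∧
  (∀ t, 0 ≤ level M x t ∧ level M x t ≤ M.Ebar) ∧
  (∀ v t, 0 ≤ x.pD v t) ∧
  (∀ v, ∑ i, x.pD v i ≤ M.Einit v) ∧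
  (M.Eend ≤ (∑ i, x.pC i) + ∑ v, (M.Einit v - ∑ i, x.pD v i))

/-- Objective of the VLB market-clearing LP. -/
def Obj (M : MarketData nT nL nG nV) (x : Sol nT nL nG nV) : ℝ :=
  ∑ t, ((∑ l, M.U l t * x.d l t) - (∑ g, M.C g t * x.p g t)
    - ∑ v, M.S v * x.pD v t)

/-- Optimality for the VLB market-clearing LP. -/
def IsOptimal (M : MarketData nT nL nG nV) (x : Sol nT nL nG nV) : Prop :=
  Feasible M x ∧ ∀ y, Feasible M y → Obj M y ≤ Obj M x

/-- If an optimal solution (with all `S_v > 0`) simultaneously charges the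
intra-storage and discharges the inter-storage at some period `τ`, then there is another
period `κ ≠ τ` in which the intra-storage discharges (`p^{C,a*}_κ < 0`). -/
theorem exists_intra_discharging_period
    (M : MarketData nT nL nG nV) (x : Sol nT nL nG nV)
    (hS : ∀ v, 0 < M.S v) (hopt : IsOptimal M x)
    (τ : Fin nT) (hτC : 0 < x.pC τ) (hτD : 0 < ∑ v, x.pD v τ) :
    ∃ κ : Fin nT, κ ≠ τ ∧ x.pC κ < 0 := by
  classical
  by_contra hcon
  push_neg at hcon
  obtain ⟨⟨hbal, hp, hd, hsumC, hlev, hDnn, hDcap, hend⟩, hmax⟩ := hopt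
  have hpCnn : ∀ t, 0 ≤ x.pC t := by
    intro t
    by_cases ht : t = τ
    · subst ht; exact hτC.le
    · exact hcon t ht
  set D := ∑ v, x.pD v τ with hDdef
  have hD : 0 < D := hτD
  set q := min (x.pC τ) D with hqdef
  have hq : 0 < q := lt_min hτC hD
  have hqD : q ≤ D := min_le_right _ _
  have hqC : q ≤ x.pC τ := min_le_left _ _
  set r := q / D with hrdef
  have hr0 : 0 ≤ r := div_nonneg hq.le hD.le
  have hrpos : 0 < r := div_pos hq hD
  have hr1 : r ≤ 1 := (div_le_one hD).mpr hqD
  have hrD : r * D = q := div_mul_cancel₀ q hD.ne'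
  set y : Sol nT nL nG nV :=
    ⟨x.d, x.p, fun t => x.pC t - (if t = τ then q else 0),
      fun v t => x.pD v t - (if t = τ then r * x.pD v τ else 0)⟩ with hy
  have sumC : ∀ s : Finset (Fin nT),
      (∑ i ∈ s, y.pC i) = (∑ i ∈ s, x.pC i) - (if τ ∈ s then q else 0) := by
    intro s
    simp only [hy, Finset.sum_sub_distrib, Finset.sum_ite_eq' s τ (fun _ => q)]
  have sumD : ∀ (v : Fin nV) (s : Finset (Fin nT)),
      (∑ i ∈ s, y.pD v i) = (∑ i ∈ s, x.pD v i)
        - (if τ ∈ s then r * x.pD v τ else 0) := by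
    intro v s
    simp only [hy, Finset.sum_sub_distrib,
      Finset.sum_ite_eq' s τ (fun _ => r * x.pD v τ)]
  have sumDv : ∀ t : Fin nT,
      (∑ v, y.pD v t) = (∑ v, x.pD v t) - (if t = τ then q else 0) := by
    intro t
    simp only [hy]
    rw [Finset.sum_sub_distrib]
    by_cases ht : t = τ
    · simp only [ht, if_pos rfl, if_true, ← Finset.mul_sum, ← hDdef, hrD]
    · simp [ht]
  have sumE : ∀ s : Finset (Fin nT),
      (∑ v, (M.Einit v - ∑ i ∈ s, y.pD v i))
        = (∑ v, (M.Einit v - ∑ i ∈ s, x.pD v i)) + (if τ ∈ s then q else 0) := by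
    intro s
    by_cases hmem : τ ∈ s
    · simp only [sumD, if_pos hmem]
      have h1 : ∀ v : Fin nV,
          M.Einit v - (∑ i ∈ s, x.pD v i - r * x.pD v τ)
            = (M.Einit v - ∑ i ∈ s, x.pD v i) + r * x.pD v τ := fun v => by ring
      simp only [h1]
      rw [Finset.sum_add_distrib, ← Finset.mul_sum, ← hDdef, hrD]
    · simp [sumD, hmem]
  have levEq : ∀ t, level M y t = level M x t := by
    intro t
    unfold level
    rw [sumC, sumE]
    ring
  have hfeasy : Feasible M y := by
    refine ⟨?_, hp, hd, ?_, ?_, ?_, ?_, ?_⟩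
    · intro t
      have hb := hbal t
      have hyc : y.pC t = x.pC t - (if t = τ then q else 0) := by simp [hy]
      have hyd : (∑ l, y.d l t) = ∑ l, x.d l t := by simp [hy]
      have hyp : (∑ g, y.p g t) = ∑ g, x.p g t := by simp [hy]
      rw [hyc, hyd, hyp, sumDv]
      ring_nf
      ring_nf at hb
      linarith
    · rw [sumC, if_pos (Finset.mem_univ τ)]
      have h1 : x.pC τ ≤ ∑ i, x.pC i :=
        Finset.single_le_sum (fun i _ => hpCnn i) (Finset.mem_univ τ)
      linarith
    · intro t; rw [levEq t]; exact hlev t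
    · intro v t
      simp only [hy]
      by_cases ht : t = τ
      · subst ht
        simp only [if_pos rfl, if_true]
        have h1 : 0 ≤ (1 - r) * x.pD v t := mul_nonneg (by linarith) (hDnn v t)
        nlinarith
      · simp [ht, hDnn v t]
    · intro v
      rw [sumD v Finset.univ, if_pos (Finset.mem_univ τ)]
      have h1 : 0 ≤ r * x.pD v τ := mul_nonneg hr0 (hDnn v τ)
      linarith [hDcap v]
    · rw [sumC, sumE, if_pos (Finset.mem_univ τ)]
      linarith [hend]
  have key : Obj M y - Obj M x = r * ∑ v, M.S v * x.pD v τ := by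
    unfold Obj
    rw [← Finset.sum_sub_distrib]
    have h2 : ∀ t : Fin nT,
        (((∑ l, M.U l t * y.d l t) - (∑ g, M.C g t * y.p g t)
            - ∑ v, M.S v * y.pD v t)
          - ((∑ l, M.U l t * x.d l t) - (∑ g, M.C g t * x.p g t)
            - ∑ v, M.S v * x.pD v t))
        = (if t = τ then r * ∑ v, M.S v * x.pD v τ else 0) := by
      intro t
      by_cases ht : t = τ
      · subst ht
        simp only [hy, if_pos rfl, if_true]
        have h3 : ∀ v : Fin nV,
            M.S v * (x.pD v t - r * x.pD v t)
              = M.S v * x.pD v t - r * (M.S v * x.pD v t) := fun v => by ring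
        simp only [h3]
        rw [Finset.sum_sub_distrib, ← Finset.mul_sum]
        ring
      · simp [hy, ht]
    rw [Finset.sum_congr rfl (fun t _ => h2 t),
      Finset.sum_ite_eq' Finset.univ τ (fun _ => r * ∑ v, M.S v * x.pD v τ),
      if_pos (Finset.mem_univ τ)]
  have hpos : 0 < ∑ v, M.S v * x.pD v τ := by
    obtain ⟨v, hv⟩ : ∃ v, 0 < x.pD v τ := by
      by_contra hno
      push_neg at hno
      have : (∑ v, x.pD v τ) ≤ 0 :=
        Finset.sum_nonpos (fun v _ => hno v)
      linarith
    exact Finset.sum_pos' (fun i _ => mul_nonneg (hS i).le (hDnn i τ))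
      ⟨v, Finset.mem_univ v, mul_pos (hS v) hv⟩
  have hle := hmax y hfeasy
  nlinarith [mul_pos hrpos hpos]
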